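/- Let Γ be a k-regular strongly regular graph with parameters (v, k, λ, μ) and smallest adjacency eigenvalue −m (with m > 0). If S is a clique in Γ, then |S| ≤ 1 + k/m. -/

import Mathlib

open Finset Matrix SimpleGraph

set_option maxHeartbeats 1000000

theorem hoffman_clique_bound {V : Type*} [Fintype V] [DecidableEq V]
    (G : SimpleGraph V) [DecidableRel G.Adj]
    (v k l mu : ℕ) (hSRG : G.IsSRGWith v k l mu)
    (m : ℝ) (hm : 0 < m)
    (hev : Module.End.HasEigenvalue (Matrix.toLin' (G.adjMatrix ℝ)) (-m))
    (hmin : ∀ θ : ℝ, Module.End.HasEigenvalue (Matrix.toLin' (G.adjMatrix ℝ)) θ → -m ≤ θ)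
    (S : Finset V) (hS : G.IsClique (S : Set V)) :
    (S.card : ℝ) ≤ 1 + (k : ℝ) / m := by
  classical
  -- trivial case: S empty
  rcases S.eq_empty_or_nonempty with hSe | ⟨a, haS⟩
  · have : (0:ℝ) ≤ (k:ℝ)/m := by positivity
    simp [hSe]
    linarith
  have hc1 : 1 ≤ S.card := Finset.card_pos.mpr ⟨a, haS⟩
  -- clique degree bound: S.card ≤ k + 1
  have hck : (S.card : ℝ) ≤ (k : ℝ) + 1 := by
    have hsub : S.erase a ⊆ G.neighborFinset a := by
      intro j hj
      rw [Finset.mem_erase] at hj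
      rw [mem_neighborFinset]
      exact hS haS hj.2 (fun h => hj.1 h.symm)
    have hle := Finset.card_le_card hsub
    rw [Finset.card_erase_of_mem haS, card_neighborFinset_eq_degree, hSRG.regular a] at hle
    have : S.card ≤ k + 1 := by omega
    exact_mod_cast this
  by_cases hm1 : m ≤ 1
  · have hk : (k:ℝ) ≤ (k:ℝ)/m := by
      rw [le_div_iff₀ hm]
      nlinarith [Nat.cast_nonneg (α := ℝ) k]
    linarith
  push_neg at hm1
  -- eigenvector
  obtain ⟨u, hu⟩ := hev.exists_hasEigenvector
  have hune : u ≠ 0 := hu.2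
  have hAu : (G.adjMatrix ℝ) *ᵥ u = (-m) • u := by
    have h := hu.apply_eq_smul
    rwa [Matrix.toLin'_apply] at h
  obtain ⟨i0, hi0⟩ : ∃ i, u i ≠ 0 := Function.ne_iff.mp hune
  -- column sums
  have hcolsum : ∀ y : V → ℝ, ∑ i, ((G.adjMatrix ℝ) *ᵥ y) i = k * ∑ j, y j := by
    intro y
    have h1 : ∀ j : V, ∑ i : V, (G.adjMatrix ℝ) i j = (k : ℝ) := by
      intro j
      have h := adjMatrix_vecMul_apply G (α := ℝ) j (fun _ => (1:ℝ))
      simp only [vecMul, dotProduct, one_mul] at h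
      rw [h]
      simp [hSRG.regular j]
    calc ∑ i, ((G.adjMatrix ℝ) *ᵥ y) i = ∑ i : V, ∑ j : V, (G.adjMatrix ℝ) i j * y j := by
          simp only [mulVec, dotProduct]
      _ = ∑ j : V, (∑ i : V, (G.adjMatrix ℝ) i j) * y j := by
          rw [Finset.sum_comm]; simp only [Finset.sum_mul]
      _ = ∑ j : V, (k:ℝ) * y j := by simp_rw [h1]
      _ = k * ∑ j, y j := by rw [Finset.mul_sum]
  -- sum of eigenvector entries is 0
  have husum : ∑ i, u i = 0 := by
    have h1 := hcolsum u
    rw [hAu] at h1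
    simp only [Pi.smul_apply, smul_eq_mul, ← Finset.mul_sum] at h1
    have hkm : (0:ℝ) < (k:ℝ) + m := by positivity
    nlinarith [h1]
  -- complete graph case gives m = 1, contradiction
  by_cases hcom : ∀ x y : V, x ≠ y → G.Adj x y
  · exfalso
    have hAui : ((G.adjMatrix ℝ) *ᵥ u) i0 = - u i0 := by
      rw [adjMatrix_mulVec_apply]
      have hN : G.neighborFinset i0 = univ.erase i0 := by
        ext j
        simp only [mem_neighborFinset, Finset.mem_erase, Finset.mem_univ, and_true]
        constructor
        · exact fun h => h.ne'
        · exact fun h => hcom i0 j (Ne.symm h)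
      rw [hN, Finset.sum_erase_eq_sub (Finset.mem_univ i0), husum]
      ring
    have h2 := congrFun hAu i0
    simp only [Pi.smul_apply, smul_eq_mul] at h2
    rw [hAui] at h2
    have : (m - 1) * u i0 = 0 := by linarith
    rcases mul_eq_zero.mp this with h | h
    · linarith
    · exact hi0 h
  push_neg at hcom
  obtain ⟨p, q', hpq, hnadj⟩ := hcom
  have hmuk : (mu:ℝ) ≤ (k:ℝ) := by
    have h1 := hSRG.of_not_adj hpq hnadj
    have h2 := G.card_commonNeighbors_le_degree_left p q'
    rw [h1, hSRG.regular p] at h2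
    exact_mod_cast h2
  -- complement adjacency action
  have hcmpl : ∀ y : V → ℝ, ∀ i, ((Gᶜ.adjMatrix ℝ) *ᵥ y) i
      = (∑ j, y j) - y i - ((G.adjMatrix ℝ) *ᵥ y) i := by
    intro y i
    rw [adjMatrix_mulVec_apply, adjMatrix_mulVec_apply, neighborFinset_compl]
    rw [Finset.sum_sdiff_eq_sub (by simp : {i} ⊆ (G.neighborFinset i)ᶜ)]
    rw [Finset.sum_singleton]
    have hc := Finset.sum_compl_add_sum (G.neighborFinset i) y
    linarith
  -- eigenvalue relation
  have heig2 : m^2 + ((l:ℝ) - mu) * m = (k:ℝ) - mu := by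
    have hme := congrFun (congrArg (fun M => M *ᵥ u) (hSRG.matrix_eq (α := ℝ))) i0
    simp only [pow_two, ← Matrix.mulVec_mulVec, add_mulVec, smul_mulVec, one_mulVec,
      hAu, Matrix.mulVec_smul, Pi.add_apply, Pi.smul_apply, smul_eq_mul] at hme
    rw [hcmpl u i0, husum] at hme
    have hAu0 : ((G.adjMatrix ℝ) *ᵥ u) i0 = -m * u i0 := by
      rw [hAu]; simp
    rw [hAu0] at hme
    -- hme : relation times u i0
    have hcanc : (m^2 + ((l:ℝ) - mu) * m) * u i0 = ((k:ℝ) - mu) * u i0 := by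
      linear_combination hme
    exact mul_right_cancel₀ hi0 hcanc
  -- k ≥ 1
  have hkpos : 0 < k := by
    have hkR : (0:ℝ) < k := by
      nlinarith [mul_le_mul_of_nonneg_right hmuk hm.le, Nat.cast_nonneg (α := ℝ) mu,
        Nat.cast_nonneg (α := ℝ) l, mul_pos hm hm]
    exact_mod_cast hkR
  -- l + 1 ≤ k
  have hlk : l + 1 ≤ k := by
    have h9 : 0 ≤ m * (m + (l:ℝ) - mu) := by nlinarith [heig2, hmuk]
    have h10 : 0 ≤ m + (l:ℝ) - mu := by
      by_contra hcon
      push_neg at hcon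
      nlinarith [mul_pos hm (by linarith : (0:ℝ) < -(m + (l:ℝ) - mu))]
    have h11 : 0 < (m - 1) * (m + 1 + (l:ℝ) - mu) := mul_pos (by linarith) (by linarith)
    have hlkR : (l:ℝ) + 1 < k := by nlinarith [h11, heig2]
    have h12 : l + 1 < k := by exact_mod_cast hlkR
    omega
  -- k + 1 ≤ v
  have hkv : k + 1 ≤ v := by
    have h1 := G.degree_lt_card_verts i0
    rw [hSRG.regular i0, hSRG.card] at h1
    omega
  have hkvR : (k:ℝ) + 1 ≤ v := by exact_mod_cast hkv
  -- parameter identity over ℝ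
  have hpe : (k:ℝ) * ((k:ℝ) - l - 1) = ((v:ℝ) - k - 1) * mu := by
    have h := SimpleGraph.IsSRGWith.param_eq G hSRG (by omega)
    zify [show (l:ℕ) ≤ k by omega, show 1 ≤ k - l by omega,
      show (k:ℕ) ≤ v by omega, show 1 ≤ v - k by omega] at h
    exact_mod_cast h
  -- positive semidefiniteness of A + m * I
  set B : Matrix V V ℝ := G.adjMatrix ℝ + m • (1 : Matrix V V ℝ) with hBdef
  have hBH : B.IsHermitian := by
    rw [Matrix.IsHermitian, conjTranspose_add, conjTranspose_smul,
      conjTranspose_eq_transpose_of_trivial, transpose_adjMatrix,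
      conjTranspose_one]
    simp
    exact hBdef.symm
  have hPSD : B.PosSemidef := by
    refine hBH.posSemidef_iff_eigenvalues_nonneg.mpr ?_
    intro j
    set w : V → ℝ := ⇑(hBH.eigenvectorBasis j) with hwdef
    have hw : B *ᵥ w = hBH.eigenvalues j • w := hBH.mulVec_eigenvectorBasis j
    have hwne : w ≠ 0 := by
      have h1 := hBH.eigenvectorBasis.toBasis.ne_zero j
      rw [OrthonormalBasis.coe_toBasis] at h1
      intro hcon
      apply h1
      ext i
      exact congrFun hcon i
    have hAw : (G.adjMatrix ℝ) *ᵥ w = (hBH.eigenvalues j - m) • w := by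
      have hBmv : B *ᵥ w = (G.adjMatrix ℝ) *ᵥ w + m • w := by
        rw [hBdef, add_mulVec, smul_mulVec, one_mulVec]
      rw [hBmv] at hw
      rw [sub_smul]
      rw [eq_sub_of_add_eq hw]
    have hev2 : Module.End.HasEigenvalue (Matrix.toLin' (G.adjMatrix ℝ))
        (hBH.eigenvalues j - m) := by
      apply Module.End.hasEigenvalue_of_hasEigenvector
        (x := w) (μ := hBH.eigenvalues j - m)
      refine ⟨Module.End.mem_eigenspace_iff.2 ?_, hwne⟩
      rw [Matrix.toLin'_apply]
      exact hAw
    have := hmin _ hev2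
    rw [Pi.zero_apply]
    linarith
  -- the vector x = v·χ_S − |S|·1
  set c : ℝ := (S.card : ℝ) with hcdef
  have hcpos : (0:ℝ) < c := by rw [hcdef]; exact_mod_cast hc1
  have hcv : S.card ≤ v := by rw [← hSRG.card]; exact Finset.card_le_univ S
  have hcvR : c ≤ (v:ℝ) := by rw [hcdef]; exact_mod_cast hcv
  set x : V → ℝ := fun i => (if i ∈ S then (v:ℝ) else 0) - c with hxdef
  have hdot : ∀ w2 : V → ℝ, x ⬝ᵥ w2 = (v:ℝ) * (∑ i ∈ S, w2 i) - c * ∑ i, w2 i := by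
    intro w2
    simp only [dotProduct, hxdef, sub_mul, Finset.sum_sub_distrib]
    congr 1
    · simp only [ite_mul, zero_mul, Finset.sum_ite_mem, Finset.univ_inter, Finset.mul_sum]
    · rw [Finset.mul_sum]
  have hxsum : ∑ i, x i = 0 := by
    simp only [hxdef, Finset.sum_sub_distrib, Finset.sum_const, Finset.sum_ite_mem,
      Finset.univ_inter, Finset.card_univ, hSRG.card, nsmul_eq_mul, smul_eq_mul]
    rw [hcdef]; ring
  have hsS : ∑ i ∈ S, x i = c * ((v:ℝ) - c) := by
    have hxv : ∀ i ∈ S, x i = (v:ℝ) - c := by intro i hi; simp [hxdef, hi]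
    rw [Finset.sum_congr rfl hxv, Finset.sum_const, nsmul_eq_mul, hcdef]
  set N : V → ℝ := (G.adjMatrix ℝ) *ᵥ x with hNdef
  have hNS : ∀ i ∈ S, N i = (v:ℝ) * (c - 1) - c * k := by
    intro i hi
    rw [hNdef, adjMatrix_mulVec_apply]
    have hsplit : ∑ j ∈ G.neighborFinset i, x j
        = (∑ j ∈ G.neighborFinset i, (if j ∈ S then (v:ℝ) else 0))
          - (G.neighborFinset i).card * c := by
      simp [hxdef, Finset.sum_sub_distrib]
    have hinter : G.neighborFinset i ∩ S = S.erase i := by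
      ext j
      simp only [Finset.mem_inter, mem_neighborFinset, Finset.mem_erase]
      constructor
      · rintro ⟨hadj, hjS⟩; exact ⟨hadj.ne', hjS⟩
      · rintro ⟨hne, hjS⟩; exact ⟨hS hi hjS (Ne.symm hne), hjS⟩
    have h2 : ∑ j ∈ G.neighborFinset i, (if j ∈ S then (v:ℝ) else 0)
        = ((S.erase i).card : ℝ) * v := by
      rw [Finset.sum_ite_mem, hinter, Finset.sum_const, nsmul_eq_mul]
    rw [hsplit, h2, Finset.card_erase_of_mem hi, card_neighborFinset_eq_degree, hSRG.regular i]
    have hcast : ((S.card - 1 : ℕ) : ℝ) = c - 1 := by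
      rw [Nat.cast_sub hc1, hcdef]; norm_num
    rw [hcast]; ring
  have hNsum : ∑ i, N i = 0 := by rw [hNdef, hcolsum x, hxsum, mul_zero]
  have hxAx : x ⬝ᵥ N = ((v:ℝ) * c) * ((v:ℝ)*(c-1) - c*(k:ℝ)) := by
    rw [hdot N, hNsum, Finset.sum_congr rfl hNS, Finset.sum_const, nsmul_eq_mul, hcdef]
    ring
  have hxx : x ⬝ᵥ x = ((v:ℝ) * c) * ((v:ℝ) - c) := by
    rw [hdot x, hxsum, hsS]; ring
  have hA2x : (G.adjMatrix ℝ) *ᵥ N = ((l:ℝ) - mu) • N + ((k:ℝ) - mu) • x := by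
    funext i
    have hme := congrFun (congrArg (fun M => M *ᵥ x) (hSRG.matrix_eq (α := ℝ))) i
    simp only [pow_two, ← Matrix.mulVec_mulVec, add_mulVec, smul_mulVec, one_mulVec,
      Pi.add_apply, Pi.smul_apply, smul_eq_mul] at hme
    rw [hcmpl x i, hxsum] at hme
    simp only [Pi.add_apply, Pi.smul_apply, smul_eq_mul, hNdef]
    linear_combination hme
  set y : V → ℝ := N + m • x with hydef
  have hBx : B *ᵥ x = y := by
    rw [hBdef, add_mulVec, smul_mulVec, one_mulVec, hydef, hNdef]
  have hq0 : 0 ≤ x ⬝ᵥ y := by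
    have h := hPSD.dotProduct_mulVec_nonneg x
    rwa [star_trivial, hBx] at h
  have hBy : B *ᵥ y = (2*m + (l:ℝ) - mu) • y := by
    rw [hBdef, add_mulVec, smul_mulVec, one_mulVec]
    funext i
    have h := congrFun hA2x i
    simp only [hydef, mulVec_add, Matrix.mulVec_smul, Pi.add_apply, Pi.smul_apply,
      smul_eq_mul] at h ⊢
    linear_combination h - ((if i ∈ S then (v:ℝ) else 0) - c) * heig2
  have hBT : Bᵀ = B := by
    rw [hBdef, transpose_add, transpose_smul, transpose_one, transpose_adjMatrix]
  have hyy : y ⬝ᵥ y = (2*m + (l:ℝ) - mu) * (x ⬝ᵥ y) := by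
    have h1 : x ⬝ᵥ (B *ᵥ y) = (B *ᵥ x) ⬝ᵥ y := by
      rw [Matrix.dotProduct_mulVec, ← Matrix.mulVec_transpose, hBT]
    rw [hBy, hBx, dotProduct_smul, smul_eq_mul] at h1
    rw [← h1]
  have hCS : (x ⬝ᵥ y)^2 ≤ (x ⬝ᵥ x) * (y ⬝ᵥ y) := by
    have h := Finset.sum_mul_sq_le_sq_mul_sq Finset.univ x y
    simpa [dotProduct, pow_two] using h
  have hxxnn : 0 ≤ x ⬝ᵥ x := Finset.sum_nonneg fun i _ => mul_self_nonneg _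
  have hspos : 0 < 2*m + (l:ℝ) - mu := by
    by_contra hcon
    push_neg at hcon
    nlinarith [heig2, hmuk, mul_pos hm hm,
      mul_nonneg (neg_nonneg.mpr hcon) hm.le]
  have hq_le : x ⬝ᵥ y ≤ (2*m + (l:ℝ) - mu) * (x ⬝ᵥ x) := by
    rcases eq_or_lt_of_le hq0 with he | hlt
    · rw [← he]; positivity
    · have h2 := hCS
      rw [hyy] at h2
      have h3 : (x ⬝ᵥ y) * (x ⬝ᵥ y) ≤ ((2*m + (l:ℝ) - mu) * (x ⬝ᵥ x)) * (x ⬝ᵥ y) := by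
        nlinarith [h2]
      exact le_of_mul_le_mul_right h3 hlt
  have hmain : x ⬝ᵥ N ≤ (m + (l:ℝ) - mu) * (x ⬝ᵥ x) := by
    have h1 : x ⬝ᵥ y = x ⬝ᵥ N + m * (x ⬝ᵥ x) := by
      rw [hydef, dotProduct_add, dotProduct_smul, smul_eq_mul]
    linarith [hq_le, h1]
  have hvpos : (0:ℝ) < v := by
    have : (0:ℝ) ≤ k := Nat.cast_nonneg k
    linarith
  have hvcpos : (0:ℝ) < (v:ℝ) * c := mul_pos hvpos hcpos
  have hstar : (v:ℝ)*(c-1) - c*(k:ℝ) ≤ (m + (l:ℝ) - mu) * ((v:ℝ) - c) := by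
    have hplug : ((v:ℝ)*c) * ((v:ℝ)*(c-1) - c*(k:ℝ))
        ≤ ((v:ℝ)*c) * ((m + (l:ℝ) - mu) * ((v:ℝ) - c)) := by
      have h := hmain
      rw [hxAx, hxx] at h
      nlinarith [h]
    exact le_of_mul_le_mul_left hplug hvcpos
  have hgoal : c * m ≤ (k:ℝ) + m := by
    have h3 : m*((v:ℝ)*(c-1) - c*(k:ℝ)) ≤ m*((m + (l:ℝ) - mu) * ((v:ℝ) - c)) :=
      mul_le_mul_of_nonneg_left hstar hm.le
    have h4 : m*((m + (l:ℝ) - mu) * ((v:ℝ) - c)) = ((k:ℝ) - mu)*((v:ℝ) - c) := by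
      linear_combination ((v:ℝ) - c) * heig2
    have hP : (0:ℝ) < m*((v:ℝ)-(k:ℝ)) + ((k:ℝ)-(mu:ℝ)) := by
      have h8 := mul_le_mul_of_nonneg_left (by linarith : (1:ℝ) ≤ (v:ℝ) - k) hm.le
      nlinarith [hmuk, h8]
    have hcP : c * (m*((v:ℝ)-(k:ℝ)) + ((k:ℝ)-(mu:ℝ)))
        ≤ m*(v:ℝ) + ((k:ℝ)-(mu:ℝ))*(v:ℝ) := by
      nlinarith [h3, h4]
    have h6 : m*(m*(v:ℝ) + ((k:ℝ)-(mu:ℝ))*(v:ℝ))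
        = ((k:ℝ)+m)*(m*((v:ℝ)-(k:ℝ)) + ((k:ℝ)-(mu:ℝ))) := by
      linear_combination m * hpe + (k:ℝ) * heig2
    have h7 : (c*m)*(m*((v:ℝ)-(k:ℝ)) + ((k:ℝ)-(mu:ℝ)))
        ≤ ((k:ℝ)+m)*(m*((v:ℝ)-(k:ℝ)) + ((k:ℝ)-(mu:ℝ))) := by
      nlinarith [mul_le_mul_of_nonneg_left hcP hm.le, h6]
    exact le_of_mul_le_mul_right h7 hP
  have hfin : (1:ℝ) + (k:ℝ)/m = ((k:ℝ)+m)/m := by field_simp; ring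
  rw [hfin, le_div_iff₀ hm]
  exact hgoal
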